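/- Let C ⊆ F_2^n be a code such that |I(c)| ≥ 3 for every codeword c ∈ C and I(x) ≠ ∅ for every vertex x. Then C is a local identifying code. -/

import Mathlib

open SimpleGraph

/-- The closed neighbourhood of a vertex. -/
def cnbr {V : Type*} (G : SimpleGraph V) (u : V) : Set V := insert u (G.neighborSet u)

/-- The `I`-set of a vertex with respect to a code `C`. -/
def iset {V : Type*} (G : SimpleGraph V) (C : Set V) (u : V) : Set V := cnbr G u ∩ C

/-- `C` is a dominating set (covering code). -/
def IsDominating {V : Type*} (G : SimpleGraph V) (C : Set V) : Prop :=
  ∀ u, (iset G C u).Nonempty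

/-- `C` is a local identifying code. -/
def IsLocalID {V : Type*} (G : SimpleGraph V) (C : Set V) : Prop :=
  IsDominating G C ∧ ∀ u v, G.Adj u v → iset G C u ≠ iset G C v

/-- `C` is a local locating-dominating code. -/
def IsLocalLD {V : Type*} (G : SimpleGraph V) (C : Set V) : Prop :=
  IsDominating G C ∧ ∀ u v, G.Adj u v → u ∉ C → v ∉ C → iset G C u ≠ iset G C v

/-- `C` is an identifying code. -/
def IsID {V : Type*} (G : SimpleGraph V) (C : Set V) : Prop :=
  IsDominating G C ∧ ∀ u v : V, u ≠ v → iset G C u ≠ iset G C v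

/-- `C` is a locating-dominating code. -/
def IsLD {V : Type*} (G : SimpleGraph V) (C : Set V) : Prop :=
  IsDominating G C ∧ ∀ u v : V, u ≠ v → u ∉ C → v ∉ C → iset G C u ≠ iset G C v

/-- The share of a codeword `c`. -/
noncomputable def share {V : Type*} (G : SimpleGraph V) (C : Set V) (c : V) : ℝ :=
  ∑ᶠ u ∈ cnbr G c, (1 : ℝ) / (iset G C u).ncard

/-- The binary `n`-dimensional hypercube. -/
def cube (n : ℕ) : SimpleGraph (Fin n → ZMod 2) where
  Adj x y := hammingDist x y = 1
  symm := ⟨fun x y h => by change hammingDist x y = 1 at h; change hammingDist y x = 1; rwa [hammingDist_comm]⟩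
  loopless := ⟨fun x h => by change hammingDist x x = 1 at h; rw [hammingDist_self] at h; exact absurd h (by norm_num)⟩


lemma zmod2_ne {a b c : ZMod 2} (h : a ≠ b) (h2 : b ≠ c) : a = c := by
  revert a b c; decide

lemma tri_free {n : ℕ} (x y z : Fin n → ZMod 2) (hxy : hammingDist x y = 1)
    (hyz : hammingDist y z = 1) (hxz : hammingDist x z = 1) : False := by
  unfold hammingDist at *
  obtain ⟨a, ha⟩ := Finset.card_eq_one.1 hxy
  obtain ⟨b, hb⟩ := Finset.card_eq_one.1 hyz
  have hmema : ∀ i, x i ≠ y i ↔ i = a := by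
    intro i
    rw [← Finset.mem_singleton, ← ha, Finset.mem_filter]
    simp
  have hmemb : ∀ i, y i ≠ z i ↔ i = b := by
    intro i
    rw [← Finset.mem_singleton, ← hb, Finset.mem_filter]
    simp
  by_cases hab : a = b
  · -- x = z, so dist = 0
    have : (Finset.univ.filter fun i => x i ≠ z i) = ∅ := by
      apply Finset.eq_empty_of_forall_notMem
      intro i hi
      rw [Finset.mem_filter] at hi
      rcases Decidable.eq_or_ne i a with h | h
      · subst h; subst hab
        exact hi.2 (zmod2_ne ((hmema i).2 rfl) ((hmemb i).2 rfl))
      · have h1 : x i = y i := by by_contra hc; exact h ((hmema i).1 hc)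
        have h2 : y i = z i := by by_contra hc; rw [hab] at h; exact h ((hmemb i).1 hc)
        exact hi.2 (h1.trans h2)
    rw [this] at hxz; simp at hxz
  · have : (Finset.univ.filter fun i => x i ≠ z i) = {a, b} := by
      ext i
      rw [Finset.mem_filter]
      simp only [Finset.mem_insert, Finset.mem_singleton, Finset.mem_univ, true_and]
      constructor
      · intro hi
        by_contra hc
        push_neg at hc
        have h1 : x i = y i := by by_contra hh; exact hc.1 ((hmema i).1 hh)
        have h2 : y i = z i := by by_contra hh; exact hc.2 ((hmemb i).1 hh)
        exact hi (h1.trans h2)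
      · rintro (rfl | rfl)
        · have h1 : x i ≠ y i := (hmema i).2 rfl
          have h2 : y i = z i := by by_contra hh; exact hab ((hmemb i).1 hh)
          rw [← h2]; exact h1
        · have h1 : x i = y i := by by_contra hh; exact hab ((hmema i).1 hh).symm
          have h2 : y i ≠ z i := (hmemb i).2 rfl
          rw [h1]; exact h2
    rw [this, Finset.card_insert_of_notMem (by simp [hab]), Finset.card_singleton] at hxz
    omega

/-- If `|I(c)| ≥ 3` for every codeword and `I(x) ≠ ∅` for every vertex, then `C` is a
local identifying code in `F_2^n`. -/
theorem stmt11 (n : ℕ) (C : Set (Fin n → ZMod 2))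
    (h3 : ∀ c ∈ C, 3 ≤ (iset (cube n) C c).ncard)
    (hdom : ∀ x, (iset (cube n) C x).Nonempty) :
    IsLocalID (cube n) C := by
  refine ⟨hdom, fun u v hadj heq => ?_⟩
  -- iset u ⊆ {u, v}
  have hsub : iset (cube n) C u ⊆ {u, v} := by
    intro w hw
    have hw2 : w ∈ iset (cube n) C v := heq ▸ hw
    obtain ⟨hw1, -⟩ := hw
    obtain ⟨hw2, -⟩ := hw2
    rcases hw1 with rfl | hw1
    · exact Or.inl rfl
    rcases hw2 with rfl | hw2
    · exact Or.inr rfl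
    exact absurd hadj (fun h => tri_free u w v hw1 ((cube n).adj_symm hw2) h)
  obtain ⟨w, hw⟩ := hdom u
  have hwC : w ∈ C := hw.2
  have hcases := hsub hw
  have hfin : ({u, v} : Set (Fin n → ZMod 2)).Finite := (Set.finite_singleton v).insert u
  have hcard2 : ({u, v} : Set (Fin n → ZMod 2)).ncard ≤ 2 :=
    le_trans (Set.ncard_insert_le u {v}) (by simp)
  rcases hcases with rfl | rfl
  · have := h3 w hwC
    have hle : (iset (cube n) C w).ncard ≤ 2 :=
      le_trans (Set.ncard_le_ncard hsub hfin) hcard2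
    omega
  · have := h3 w hwC
    have hsub' : iset (cube n) C w ⊆ {u, w} := heq ▸ hsub
    have hle : (iset (cube n) C w).ncard ≤ 2 := by
      refine le_trans (Set.ncard_le_ncard hsub' ((Set.finite_singleton w).insert u)) ?_
      exact le_trans (Set.ncard_insert_le u {w}) (by simp)
    omega
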